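/- Let C be a causal set, let P be a maximal-cardinality path (timelike geodesic) from a to b, and let x ⋖ z ⋖ y be three consecutive elements of P. Then rank(x, y) = 2 and the diamond [x, y] is pure: every element w with x ≺ w ≺ y satisfies x ⋖ w ⋖ y. -/

import Mathlib

/-- `IsPath x y l`: the list `l` is a path from `x` to `y`, i.e. a chain of
consecutive links (covering relations) starting at `x` and ending at `y`. -/
def IsPath {C : Type*} [PartialOrder C] (x y : C) (l : List C) : Prop :=
  l.Chain' (· ⋖ ·) ∧ l.head? = some x ∧ l.getLast? = some y

/-- `rank y x` is the minimal number of links over all paths from `y` to `x`. -/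
noncomputable def rank {C : Type*} [PartialOrder C] (y x : C) : ℕ :=
  sInf {n | ∃ l : List C, IsPath y x l ∧ l.length = n + 1}
section aux
variable {C : Type*} [PartialOrder C]

lemma path_ne_nil {x y : C} {l : List C} (h : IsPath x y l) : l ≠ [] := by
  intro hn; rw [hn] at h; simp [IsPath] at h

lemma path_two {x y : C} {l : List C} (h : IsPath x y l) (hl : l.length = 2) : x ⋖ y := by
  match l, hl with
  | [u, v], _ =>
    obtain ⟨hc, hh, ht⟩ := h
    simp at hh ht
    unfold List.Chain' at hc; rw [List.isChain_pair] at hc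
    rwa [hh, ht] at hc

lemma path_single {x y : C} {l : List C} (h : IsPath x y l) (hl : l.length = 1) : x = y := by
  match l, hl with
  | [u], _ =>
    obtain ⟨hc, hh, ht⟩ := h
    simp at hh ht; rw [← hh, ← ht]

lemma path_len_ge_two {x y : C} {l : List C} (h : IsPath x y l) (hxy : x ≠ y) :
    2 ≤ l.length := by
  rcases l with _ | ⟨u, _ | ⟨v, t⟩⟩
  · exact absurd rfl (path_ne_nil h)
  · exact absurd (path_single h rfl) hxy
  · simp [Nat.succ_le_succ, Nat.le_add_left]

lemma path_append {x w y : C} {l1 l2 : List C} (h1 : IsPath x w l1) (h2 : IsPath w y l2) :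
    IsPath x y (l1 ++ l2.tail) ∧ (l1 ++ l2.tail).length + 1 = l1.length + l2.length := by
  obtain ⟨c1, hh1, ht1⟩ := h1
  obtain ⟨c2, hh2, ht2⟩ := h2
  obtain ⟨t, rfl⟩ : ∃ t, l2 = w :: t := by
    rcases l2 with _ | ⟨u, t⟩
    · simp at hh2
    · simp at hh2; exact ⟨t, by rw [hh2]⟩
  unfold List.Chain' at c2; rw [List.isChain_cons] at c2
  constructor
  · refine ⟨?_, ?_, ?_⟩
    · unfold List.Chain'; rw [List.isChain_append]
      refine ⟨c1, c2.2, ?_⟩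
      intro p hp q hq
      rw [ht1] at hp; simp at hp; subst hp
      exact c2.1 q hq
    · rw [List.head?_append, hh1]; rfl
    · rcases t with _ | ⟨u, t⟩
      · simp at ht2 ⊢; rw [ht1]; simpa using ht2
      · simp only [List.tail_cons, List.getLast?_append]
        simp only [List.getLast?_cons_cons] at ht2
        rw [ht2]; rfl
  · simp [List.length_append]; omega

lemma exists_path_of_lt [LocallyFiniteOrder C] :
    ∀ n {x y : C}, (Finset.Ioc x y).card ≤ n → x < y → ∃ l, IsPath x y l := by
  intro n
  induction n with
  | zero =>
    intro x y hc hlt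
    simp only [Nat.le_zero, Finset.card_eq_zero] at hc
    have : y ∈ Finset.Ioc x y := Finset.mem_Ioc.mpr ⟨hlt, le_refl y⟩
    rw [hc] at this; simp at this
  | succ n ih =>
    intro x y hc hlt
    obtain ⟨z, hz, hzmin⟩ : ∃ z ∈ Finset.Ioc x y, ∀ w ∈ Finset.Ioc x y, ¬ w < z := by
      obtain ⟨z, hz⟩ := Finset.exists_minimal ⟨y, Finset.mem_Ioc.mpr ⟨hlt, le_refl y⟩⟩
      exact ⟨z, hz.1, fun w hw hwz => hwz.not_ge (hz.2 hw hwz.le)⟩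
    simp only [Finset.mem_Ioc] at hz
    have hcov : x ⋖ z := by
      refine ⟨hz.1, fun w hw hwz => ?_⟩
      exact hzmin w (by simp [Finset.mem_Ioc, hw, le_trans hwz.le hz.2]) hwz
    rcases eq_or_lt_of_le hz.2 with rfl | hzy
    · exact ⟨[x, z], by simp [IsPath, List.Chain', List.isChain_pair, hcov]⟩
    · have hsub : Finset.Ioc z y ⊂ Finset.Ioc x y := by
        refine ⟨fun w hw => ?_, fun hsup => ?_⟩
        · simp only [Finset.mem_Ioc] at *
          exact ⟨lt_trans hz.1 hw.1, hw.2⟩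
        · have := hsup (by simp [Finset.mem_Ioc, hz.1, hz.2] : z ∈ Finset.Ioc x y)
          simp at this
      have hcard : (Finset.Ioc z y).card ≤ n :=
        Nat.lt_succ_iff.mp (lt_of_lt_of_le (Finset.card_lt_card hsub) hc)
      obtain ⟨l, hl⟩ := ih hcard hzy
      obtain ⟨c, hh, ht⟩ := hl
      refine ⟨x :: l, ?_, ?_, ?_⟩
      · unfold List.Chain'; rw [List.isChain_cons]
        exact ⟨fun q hq => by rw [hh] at hq; simp at hq; rwa [← hq], c⟩
      · rfl
      · rw [List.getLast?_cons, ht]; rfl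

end aux

section aux2
variable {C : Type*} [PartialOrder C]

lemma splice {a b x z y : C} {A B Q : List C} (hPp : IsPath a b (A ++ [x, z, y] ++ B))
    (hQ : IsPath x y Q) : IsPath a b (A ++ Q ++ B) := by
  obtain ⟨c, hh, ht⟩ := hPp
  obtain ⟨cQ, hhQ, htQ⟩ := hQ
  unfold List.Chain' at c cQ; rw [List.isChain_append, List.isChain_append] at c
  obtain ⟨⟨cA, cM, jAM⟩, cB, jMB⟩ := c
  refine ⟨?_, ?_, ?_⟩
  · unfold List.Chain'; rw [List.isChain_append, List.isChain_append]
    refine ⟨⟨cA, cQ, ?_⟩, cB, ?_⟩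
    · intro p hp q hq
      rw [hhQ] at hq; simp at hq; subst hq
      exact jAM p hp x rfl
    · intro p hp q hq
      rw [List.getLast?_append, htQ] at hp
      simp at hp; subst hp
      refine jMB y ?_ q hq
      rw [List.getLast?_append]; rfl
  · rw [List.head?_append, List.head?_append, hhQ]
    rw [List.head?_append, List.head?_append] at hh
    simpa using hh
  · rw [List.getLast?_append, List.getLast?_append, htQ]
    rw [List.getLast?_append, List.getLast?_append] at ht
    simpa using ht

end aux2

theorem stmt2 {C : Type*} [PartialOrder C] [LocallyFiniteOrder C] (a b : C)
    (P : List C) (hP : IsPath a b P)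
    (hmax : ∀ l : List C, IsPath a b l → l.length ≤ P.length)
    (x z y : C) (i : ℕ)
    (hx : P[i]? = some x) (hz : P[i + 1]? = some z)
    (hy : P[i + 2]? = some y) :
    rank x y = 2 ∧ ∀ w, x < w → w < y → x ⋖ w ∧ w ⋖ y := by
  obtain ⟨hi0, hx'⟩ := List.getElem?_eq_some_iff.mp hx
  obtain ⟨hi1, hz'⟩ := List.getElem?_eq_some_iff.mp hz
  obtain ⟨hi2, hy'⟩ := List.getElem?_eq_some_iff.mp hy
  have hdec : P = P.take i ++ [x, z, y] ++ P.drop (i + 3) := by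
    conv_lhs => rw [← List.take_append_drop i P]
    rw [List.drop_eq_getElem_cons hi0, List.drop_eq_getElem_cons hi1,
      show i + 1 + 1 = i + 2 from rfl, List.drop_eq_getElem_cons hi2,
      show i + 2 + 1 = i + 3 from rfl, hx', hz', hy']
    simp
  have hc := hP.1
  unfold List.Chain' at hc; rw [hdec, List.isChain_append, List.isChain_append] at hc
  have hxz : x ⋖ z := by
    have := hc.1.2.1
    simp [List.isChain_cons_cons, List.isChain_pair] at this
    exact this.1
  have hzy : z ⋖ y := by
    have := hc.1.2.1
    simp [List.isChain_cons_cons, List.isChain_pair] at this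
    exact this.2
  have hxy : x < y := hxz.lt.trans hzy.lt
  have hbound : ∀ Q : List C, IsPath x y Q → Q.length ≤ 3 := by
    intro Q hQ
    have hsp := splice (hdec ▸ hP) hQ
    have hle := hmax _ hsp
    simp only [List.length_append, List.length_cons, List.length_nil] at hle
    have hlen := congrArg List.length hdec
    simp only [List.length_append, List.length_cons, List.length_nil] at hlen
    omega
  have hpath3 : IsPath x y [x, z, y] :=
    ⟨by simp [List.Chain', List.isChain_cons_cons, List.isChain_pair, hxz, hzy], rfl, by simp⟩
  constructor
  · unfold rank
    apply le_antisymm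
    · exact Nat.sInf_le ⟨[x, z, y], hpath3, rfl⟩
    · refine le_csInf ⟨2, ⟨[x, z, y], hpath3, rfl⟩⟩ ?_
      rintro n ⟨l, hl, hlen⟩
      by_contra hn
      push_neg at hn
      interval_cases n
      · exact absurd (path_single hl hlen) hxy.ne
      · exact (path_two hl (by omega)).2 hxz.lt hzy.lt
  · intro w hxw hwy
    obtain ⟨l1, hl1⟩ := exists_path_of_lt _ (le_refl (Finset.Ioc x w).card) hxw
    obtain ⟨l2, hl2⟩ := exists_path_of_lt _ (le_refl (Finset.Ioc w y).card) hwy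
    obtain ⟨hcat, hcatlen⟩ := path_append hl1 hl2
    have h1 : 2 ≤ l1.length := path_len_ge_two hl1 hxw.ne
    have h2 : 2 ≤ l2.length := path_len_ge_two hl2 hwy.ne
    have h3 := hbound _ hcat
    exact ⟨path_two hl1 (by omega), path_two hl2 (by omega)⟩
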